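/- Let H be a multigraph (a 2-uniform multihypergraph) with maximum degree Δ. Then the chromatic index of H is at most ⌊3Δ/2⌋ (Shannon's theorem). -/

import Mathlib

open Finset
set_option linter.unusedSectionVars false

namespace Shannon9

attribute [local instance] Classical.propDecidable

variable {V : Type*} [DecidableEq V] {ι : Type*} [Fintype ι] [DecidableEq ι] {k : ℕ}

/-- Properness of a partial edge colouring: two edges sharing a vertex and a colour coincide. -/
def Proper (E : ι → Finset V) (c : ι → Option (Fin k)) : Prop :=
  ∀ ⦃i j : ι⦄ ⦃x : V⦄ ⦃col : Fin k⦄, x ∈ E i → x ∈ E j →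
    c i = some col → c j = some col → i = j

/-- The colour `δ` does not appear at vertex `x`. -/
def Free (E : ι → Finset V) (c : ι → Option (Fin k)) (x : V) (δ : Fin k) : Prop :=
  ∀ i, x ∈ E i → c i ≠ some δ

section Walk

variable (A B : V → Option V)

/-- The forced alternating walk starting at `u`, first stepping along `B`. -/
def walk (u : V) : ℕ → Option V
  | 0 => some u
  | n+1 => (walk u n).bind (fun x => if n % 2 = 0 then B x else A x)

lemma walk_none_mono {u : V} {m n : ℕ} (h : m ≤ n) (hm : walk A B u m = none) :
    walk A B u n = none := by
  induction n, h using Nat.le_induction with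
  | base => exact hm
  | succ n hn ih => show (walk A B u n).bind _ = none; rw [ih]; rfl

lemma walk_step (hA : ∀ x y, A x = some y → A y = some x)
    (hB : ∀ x y, B x = some y → B y = some x) {u : V} (hAu : A u = none)
    {n : ℕ} {x y : V} (hx : walk A B u n = some x)
    (hxy : A x = some y ∨ B x = some y) :
    ∃ m, walk A B u m = some y := by
  match n with
  | 0 =>
    have hxu : x = u := by
      have : some u = some x := hx
      exact (Option.some.inj this).symm
    subst hxu
    rcases hxy with h | h
    · rw [hAu] at h; cases h
    · refine ⟨1, ?_⟩
      show (walk A B x 0).bind (fun z => if 0 % 2 = 0 then B z else A z) = some y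
      simp [walk, h]
  | n+1 =>
    have hx' : (walk A B u n).bind (fun z => if n % 2 = 0 then B z else A z) = some x := hx
    obtain ⟨z, hz, hzx⟩ := Option.bind_eq_some_iff.mp hx'
    have hw2 : walk A B u (n+2) =
        (some x).bind (fun z => if (n+1) % 2 = 0 then B z else A z) := by
      show (walk A B u (n+1)).bind _ = _
      rw [hx]
    by_cases hpar : n % 2 = 0
    · rw [if_pos hpar] at hzx
      have hBx : B x = some z := hB _ _ hzx
      have hpar2 : ¬ ((n+1) % 2 = 0) := by omega
      rcases hxy with h | h
      · exact ⟨n+2, by rw [hw2]; simp [hpar2, h]⟩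
      · have : z = y := Option.some.inj (hBx.symm.trans h)
        exact ⟨n, this ▸ hz⟩
    · rw [if_neg hpar] at hzx
      have hAx : A x = some z := hA _ _ hzx
      have hpar2 : (n+1) % 2 = 0 := by omega
      rcases hxy with h | h
      · have : z = y := Option.some.inj (hAx.symm.trans h)
        exact ⟨n, this ▸ hz⟩
      · exact ⟨n+2, by rw [hw2]; simp [hpar2, h]⟩

lemma walk_end (hB : ∀ x y, B x = some y → B y = some x) {u v : V}
    (hBv : B v = none) (hvu : v ≠ u) {m : ℕ} (hm : walk A B u m = some v) :
    walk A B u (m+1) = none := by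
  match m with
  | 0 =>
    exact absurd (Option.some.inj hm).symm hvu
  | n+1 =>
    have hx' : (walk A B u n).bind (fun z => if n % 2 = 0 then B z else A z) = some v := hm
    obtain ⟨z, hz, hzv⟩ := Option.bind_eq_some_iff.mp hx'
    by_cases hpar : n % 2 = 0
    · rw [if_pos hpar] at hzv
      rw [hB _ _ hzv] at hBv; cases hBv
    · have hpar2 : (n+1) % 2 = 0 := by omega
      show (walk A B u (n+1)).bind _ = none
      rw [hm]
      simp [hpar2, hBv]

lemma walk_unique (hA : ∀ x y, A x = some y → A y = some x)
    (hB : ∀ x y, B x = some y → B y = some x) {u v w : V} (hAu : A u = none)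
    (hBv : B v = none) (hBw : B w = none) (hvu : v ≠ u) (hwu : w ≠ u)
    (hv : Relation.ReflTransGen (fun x y => A x = some y ∨ B x = some y) u v)
    (hw : Relation.ReflTransGen (fun x y => A x = some y ∨ B x = some y) u w) :
    v = w := by
  have hmono : ∀ x, Relation.ReflTransGen (fun x y => A x = some y ∨ B x = some y) u x →
      ∃ m, walk A B u m = some x := by
    intro x hx
    induction hx with
    | refl => exact ⟨0, rfl⟩
    | tail _ hbc ih =>
      obtain ⟨m, hm⟩ := ih
      exact walk_step A B hA hB hAu hm hbc
  obtain ⟨m, hmv⟩ := hmono v hv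
  obtain ⟨n, hnw⟩ := hmono w hw
  have hev := walk_end A B hB hBv hvu hmv
  have hew := walk_end A B hB hBw hwu hnw
  rcases lt_trichotomy m n with h | h | h
  · have := walk_none_mono A B (by omega : m + 1 ≤ n) hev
    rw [this] at hnw; cases hnw
  · subst h; exact Option.some.inj (hmv.symm.trans hnw)
  · have := walk_none_mono A B (by omega : n + 1 ≤ m) hew
    rw [this] at hmv; cases hmv

end Walk


section Graph

variable (E : ι → Finset V)

/-- The other endpoint of a 2-element edge. -/
noncomputable def other (s : Finset V) (x : V) : V :=
  if h : (s.erase x).Nonempty then h.choose else x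

lemma other_spec {s : Finset V} (hs : s.card = 2) {x : V} (hx : x ∈ s) :
    other s x ∈ s ∧ other s x ≠ x ∧ ∀ y ∈ s, y = x ∨ y = other s x := by
  have hcard : (s.erase x).card = 1 := by rw [Finset.card_erase_of_mem hx, hs]
  have hne : (s.erase x).Nonempty := by rw [← Finset.card_pos, hcard]; norm_num
  have hmem := hne.choose_spec
  simp only [other, dif_pos hne]
  refine ⟨Finset.mem_of_mem_erase hmem, Finset.ne_of_mem_erase hmem, ?_⟩
  intro y hy
  by_cases hyx : y = x
  · exact Or.inl hyx
  · exact Or.inr (Finset.card_le_one.mp (le_of_eq hcard) _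
      (Finset.mem_erase.mpr ⟨hyx, hy⟩) _ hmem)

/-- The partner of `x` along the (unique) edge coloured `δ` at `x`, if any. -/
noncomputable def partner (c : ι → Option (Fin k)) (δ : Fin k) (x : V) : Option V :=
  if h : ∃ i, x ∈ E i ∧ c i = some δ then some (other (E h.choose) x) else none

lemma partner_none {c : ι → Option (Fin k)} {δ : Fin k} {x : V}
    (h : Free E c x δ) : partner E c δ x = none := by
  rw [partner, dif_neg]
  rintro ⟨i, hi, hc⟩
  exact h i hi hc

lemma partner_eq_some (hE : ∀ i, (E i).card = 2) {c : ι → Option (Fin k)}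
    (hP : Proper E c) {δ : Fin k} {i : ι} {x : V} (hx : x ∈ E i) (hc : c i = some δ) :
    partner E c δ x = some (other (E i) x) := by
  have h : ∃ j, x ∈ E j ∧ c j = some δ := ⟨i, hx, hc⟩
  rw [partner, dif_pos h]
  have hspec := h.choose_spec
  have heq : h.choose = i := hP hspec.1 hx hspec.2 hc
  rw [heq]

lemma partner_some (hE : ∀ i, (E i).card = 2) {c : ι → Option (Fin k)}
    {δ : Fin k} {x y : V} (h : partner E c δ x = some y) :
    ∃ i, x ∈ E i ∧ y ∈ E i ∧ y ≠ x ∧ c i = some δ := by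
  rw [partner] at h
  split_ifs at h with hex
  obtain ⟨hx, hc⟩ := hex.choose_spec
  obtain ⟨h1, h2, _⟩ := other_spec (hE _) hx
  have hy := Option.some.inj h
  exact ⟨_, hx, hy ▸ h1, hy ▸ h2, hc⟩

lemma partner_symm (hE : ∀ i, (E i).card = 2) {c : ι → Option (Fin k)}
    (hP : Proper E c) {δ : Fin k} {x y : V} (h : partner E c δ x = some y) :
    partner E c δ y = some x := by
  obtain ⟨i, hx, hy, hyx, hc⟩ := partner_some E hE h
  rw [partner_eq_some E hE hP hy hc]
  obtain ⟨_, _, h3⟩ := other_spec (hE i) hy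
  rcases h3 x hx with h | h
  · exact absurd h.symm hyx
  · rw [← h]

/-- Two vertices are linked if some edge coloured `α` or `γ` contains both. -/
def Link (c : ι → Option (Fin k)) (α γ : Fin k) (x y : V) : Prop :=
  ∃ i, (c i = some α ∨ c i = some γ) ∧ x ∈ E i ∧ y ∈ E i ∧ x ≠ y

def Reach (c : ι → Option (Fin k)) (α γ : Fin k) (u x : V) : Prop :=
  Relation.ReflTransGen (Link E c α γ) u x

def swapcol (α γ δ : Fin k) : Fin k := if δ = α then γ else if δ = γ then α else δ

lemma swapcol_gamma (α γ : Fin k) : swapcol α γ γ = α := by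
  unfold swapcol; split_ifs with h1 h2 <;> simp_all

lemma swapcol_invol (α γ δ : Fin k) : swapcol α γ (swapcol α γ δ) = δ := by
  unfold swapcol
  split_ifs <;> simp_all

/-- Swap colours `α` and `γ` on the connected component (in the `αγ`-subgraph) of `u`. -/
noncomputable def swapc (c : ι → Option (Fin k)) (α γ : Fin k) (u : V) (i : ι) :
    Option (Fin k) :=
  if ∃ x ∈ E i, Reach E c α γ u x then (c i).map (swapcol α γ) else c i

lemma reach_of_mem {c : ι → Option (Fin k)} {α γ : Fin k} {u : V} {i : ι} {x y : V}
    (hc : c i = some α ∨ c i = some γ) (hx : x ∈ E i) (hy : y ∈ E i)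
    (hR : Reach E c α γ u x) : Reach E c α γ u y := by
  by_cases hxy : x = y
  · exact hxy ▸ hR
  · exact hR.tail ⟨i, hc, hx, hy, hxy⟩

lemma swap_reach {c : ι → Option (Fin k)} {α γ : Fin k} {u : V} {i : ι} {x : V}
    (hx : x ∈ E i) (hR : Reach E c α γ u x) :
    swapc E c α γ u i = (c i).map (swapcol α γ) :=
  if_pos ⟨x, hx, hR⟩

lemma swap_unreach {c : ι → Option (Fin k)} {α γ : Fin k} {u : V} {i : ι} {x : V}
    (hx : x ∈ E i) (hR : ¬ Reach E c α γ u x) :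
    swapc E c α γ u i = c i := by
  rw [swapc]
  split_ifs with h
  · obtain ⟨y, hy, hRy⟩ := h
    by_cases hcol : c i = some α ∨ c i = some γ
    · exact absurd (reach_of_mem E hcol hy hx hRy) hR
    · push_neg at hcol
      cases hc : c i with
      | none => rfl
      | some δ =>
        have h1 : δ ≠ α := by rintro rfl; exact hcol.1 hc
        have h2 : δ ≠ γ := by rintro rfl; exact hcol.2 hc
        simp [swapcol, h1, h2]
  · rfl

lemma swap_none_iff {c : ι → Option (Fin k)} {α γ : Fin k} {u : V} {i : ι} :
    swapc E c α γ u i = none ↔ c i = none := by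
  rw [swapc]
  split_ifs with h
  · rw [Option.map_eq_none_iff]
  · rfl

lemma proper_swap {c : ι → Option (Fin k)} {α γ : Fin k} {u : V}
    (hP : Proper E c) : Proper E (swapc E c α γ u) := by
  intro i j x col hi hj hci hcj
  by_cases hR : Reach E c α γ u x
  · rw [swap_reach E hi hR] at hci
    rw [swap_reach E hj hR] at hcj
    obtain ⟨δi, hδi, hsi⟩ := Option.map_eq_some_iff.mp hci
    obtain ⟨δj, hδj, hsj⟩ := Option.map_eq_some_iff.mp hcj
    have : δi = δj := by
      have h1 : δi = swapcol α γ col := by rw [← hsi, swapcol_invol]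
      have h2 : δj = swapcol α γ col := by rw [← hsj, swapcol_invol]
      rw [h1, h2]
    exact hP hi hj hδi (this ▸ hδj)
  · rw [swap_unreach E hi hR] at hci
    rw [swap_unreach E hj hR] at hcj
    exact hP hi hj hci hcj

lemma free_swap_reach {c : ι → Option (Fin k)} {α γ : Fin k} {u x : V} {δ : Fin k}
    (hR : Reach E c α γ u x) (h : Free E c x (swapcol α γ δ)) :
    Free E (swapc E c α γ u) x δ := by
  intro i hi hci
  rw [swap_reach E hi hR] at hci
  obtain ⟨ε, hε, hsε⟩ := Option.map_eq_some_iff.mp hci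
  have : ε = swapcol α γ δ := by rw [← hsε, swapcol_invol]
  exact h i hi (this ▸ hε)

lemma free_swap_unreach {c : ι → Option (Fin k)} {α γ : Fin k} {u x : V} {δ : Fin k}
    (hR : ¬ Reach E c α γ u x) (h : Free E c x δ) :
    Free E (swapc E c α γ u) x δ := by
  intro i hi hci
  rw [swap_unreach E hi hR] at hci
  exact h i hi hci

lemma link_partner (hE : ∀ i, (E i).card = 2) {c : ι → Option (Fin k)}
    (hP : Proper E c) {α γ : Fin k} {x y : V} (h : Link E c α γ x y) :
    partner E c α x = some y ∨ partner E c γ x = some y := by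
  obtain ⟨i, hc, hx, hy, hxy⟩ := h
  have key : ∀ δ, c i = some δ → partner E c δ x = some y := by
    intro δ hδ
    rw [partner_eq_some E hE hP hx hδ]
    obtain ⟨_, _, h3⟩ := other_spec (hE i) hx
    rcases h3 y hy with h | h
    · exact absurd h.symm hxy
    · rw [← h]
  rcases hc with h | h
  · exact Or.inl (key _ h)
  · exact Or.inr (key _ h)

lemma no_two_ends (hE : ∀ i, (E i).card = 2) {c : ι → Option (Fin k)}
    (hP : Proper E c) {α γ : Fin k} {u v w : V}
    (hu : Free E c u α) (hv : Free E c v γ) (hw : Free E c w γ)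
    (hvu : v ≠ u) (hwu : w ≠ u) (hRv : Reach E c α γ u v) (hRw : Reach E c α γ u w) :
    v = w := by
  set A := partner E c α with hA'
  set B := partner E c γ with hB'
  have hA : ∀ x y, A x = some y → A y = some x := fun x y h => partner_symm E hE hP h
  have hB : ∀ x y, B x = some y → B y = some x := fun x y h => partner_symm E hE hP h
  have hAu : A u = none := partner_none E hu
  have hBv : B v = none := partner_none E hv
  have hBw : B w = none := partner_none E hw
  have hmono : ∀ x, Reach E c α γ u x →
      Relation.ReflTransGen (fun x y => A x = some y ∨ B x = some y) u x := by
    intro x hx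
    exact Relation.ReflTransGen.mono (fun a b hab => link_partner E hE hP hab) u x hx
  exact walk_unique A B hA hB hAu hBv hBw hvu hwu (hmono v hRv) (hmono w hRw)

end Graph


section Extend

variable (E : ι → Finset V)

lemma card_free (c : ι → Option (Fin k)) (x : V) {d : ℕ}
    (hd : (univ.filter (fun i => x ∈ E i ∧ c i ≠ none)).card ≤ d) :
    k - d ≤ (univ.filter (fun δ : Fin k => Free E c x δ)).card := by
  rcases Nat.eq_zero_or_pos k with hk | hk
  · simp [hk]
  · have hsub : (univ.filter (fun δ : Fin k => ¬ Free E c x δ)) ⊆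
        (univ.filter (fun i => x ∈ E i ∧ c i ≠ none)).image
          (fun i => (c i).getD ⟨0, hk⟩) := by
      intro δ hδ
      rw [Finset.mem_filter] at hδ
      simp only [mem_filter, mem_univ, true_and, Free] at hδ
      push_neg at hδ
      obtain ⟨i, hi, hc⟩ := hδ
      refine mem_image.mpr ⟨i, ?_, ?_⟩
      · simp only [mem_filter, mem_univ, true_and]
        exact ⟨hi, by rw [hc]; exact Option.some_ne_none _⟩
      · rw [hc]; rfl
    have h1 := (card_le_card hsub).trans ((Finset.card_image_le).trans hd)
    have h2 : (univ.filter (fun δ : Fin k => Free E c x δ)).card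
        + (univ.filter (fun δ : Fin k => ¬ Free E c x δ)).card = k := by
      rw [Finset.card_filter_add_card_filter_not]
      simp
    omega

lemma update_none {c : ι → Option (Fin k)} {e i : ι} {δ : Fin k}
    (h : Function.update c e (some δ) i = none) : c i = none ∧ i ≠ e := by
  by_cases hie : i = e
  · subst hie; rw [Function.update_self] at h; cases h
  · rw [Function.update_of_ne hie] at h; exact ⟨h, hie⟩

lemma color_edge {c : ι → Option (Fin k)} (hP : Proper E c) {e : ι} {u v : V} {δ : Fin k}
    (hEe : E e = {u, v}) (he : c e = none) (hu : Free E c u δ) (hv : Free E c v δ) :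
    Proper E (Function.update c e (some δ)) := by
  have hmem : ∀ x, x ∈ E e → x = u ∨ x = v := by
    intro x hx; rw [hEe] at hx; simpa using hx
  intro i j x col hi hj hci hcj
  by_cases hie : i = e <;> by_cases hje : j = e
  · rw [hie, hje]
  · exfalso
    subst hie
    rw [Function.update_self] at hci
    rw [Function.update_of_ne hje] at hcj
    have hcol : col = δ := (Option.some.inj hci).symm
    subst hcol
    rcases hmem x hi with rfl | rfl
    · exact hu j hj hcj
    · exact hv j hj hcj
  · exfalso
    subst hje
    rw [Function.update_self] at hcj
    rw [Function.update_of_ne hie] at hci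
    have hcol : col = δ := (Option.some.inj hcj).symm
    subst hcol
    rcases hmem x hj with rfl | rfl
    · exact hu i hi hci
    · exact hv i hi hci
  · rw [Function.update_of_ne hie] at hci
    rw [Function.update_of_ne hje] at hcj
    exact hP hi hj hci hcj

end Extend


section Main

variable (E : ι → Finset V)

lemma extend_step (hE : ∀ i, (E i).card = 2) {Δ : ℕ}
    (hdeg : ∀ v : V, (univ.filter (fun i : ι => v ∈ E i)).card ≤ Δ)
    (hkD : Δ ≤ k) (hk3 : 3 * Δ ≤ 2 * k + 1)
    {c : ι → Option (Fin k)} (hP : Proper E c) {e : ι} (he : c e = none) :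
    ∃ c' : ι → Option (Fin k), Proper E c' ∧ ∀ i, c' i = none → c i = none ∧ i ≠ e := by
  classical
  obtain ⟨u, v, huv, hEe⟩ := Finset.card_eq_two.mp (hE e)
  have hue : u ∈ E e := by rw [hEe]; simp
  have hve : v ∈ E e := by rw [hEe]; simp
  have hmem_e : ∀ x, x ∈ E e → x = u ∨ x = v := by
    intro x hx; rw [hEe] at hx; simpa using hx
  have hD1 : 1 ≤ Δ :=
    le_trans (Finset.card_pos.mpr ⟨e, by simp [hue]⟩) (hdeg u)
  -- cardinality of free sets at the endpoints of an uncoloured edge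
  have key_card : ∀ (c' : ι → Option (Fin k)) (e' : ι) (x : V), x ∈ E e' → c' e' = none →
      k - (Δ - 1) ≤ (univ.filter (fun δ : Fin k => Free E c' x δ)).card := by
    intro c' e' x hx he'
    apply card_free E c' x
    calc (univ.filter (fun i => x ∈ E i ∧ c' i ≠ none)).card
        ≤ ((univ.filter (fun i => x ∈ E i)).erase e').card := by
          apply card_le_card
          intro i hi
          simp only [mem_filter, mem_univ, true_and] at hi
          refine mem_erase.mpr ⟨?_, by simp [hi.1]⟩
          rintro rfl; exact hi.2 he'
      _ ≤ Δ - 1 := by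
          rw [card_erase_of_mem (by simp [hx])]
          exact Nat.sub_le_sub_right (hdeg x) 1
  by_cases H1 : ∃ δ, Free E c u δ ∧ Free E c v δ
  · obtain ⟨δ, h1, h2⟩ := H1
    exact ⟨Function.update c e (some δ), color_edge E hP hEe he h1 h2,
      fun i hi => update_none hi⟩
  push_neg at H1
  -- pick β free at v, and the β-edge f = uw at u
  have hFv := key_card c e v hve he
  obtain ⟨β, hβ⟩ := Finset.card_pos.mp (lt_of_lt_of_le (by omega) hFv)
  have hβv : Free E c v β := (mem_filter.mp hβ).2
  have hβu : ¬ Free E c u β := fun h => H1 β h hβv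
  simp only [Free] at hβu
  push_neg at hβu
  obtain ⟨f, huf, hcf⟩ := hβu
  have hef : f ≠ e := by rintro rfl; rw [he] at hcf; cases hcf
  obtain ⟨w, hwu, hEf⟩ : ∃ w, w ≠ u ∧ E f = {u, w} := by
    obtain ⟨a, b, hab, hEf⟩ := Finset.card_eq_two.mp (hE f)
    rw [hEf] at huf
    simp only [mem_insert, mem_singleton] at huf
    rcases huf with rfl | rfl
    · exact ⟨b, hab.symm, hEf⟩
    · exact ⟨a, hab, by rw [hEf]; exact Finset.pair_comm a u⟩
  have huf : u ∈ E f := by rw [hEf]; simp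
  have hwf : w ∈ E f := by rw [hEf]; simp
  have hmem_f : ∀ x, x ∈ E f → x = u ∨ x = w := by
    intro x hx; rw [hEf] at hx; simpa using hx
  have hwv : w ≠ v := by rintro rfl; exact hβv f hwf hcf
  have hwe : w ∉ E e := by
    intro h
    rcases hmem_e w h with rfl | rfl
    · exact hwu rfl
    · exact hwv rfl
  -- the shifted colouring c₂ : uncolour f, give β to e
  set c₂ : ι → Option (Fin k) :=
    Function.update (Function.update c f none) e (some β) with hc₂def
  have hc₂e : c₂ e = some β := by rw [hc₂def, Function.update_self]
  have hc₂f : c₂ f = none := by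
    rw [hc₂def, Function.update_of_ne hef, Function.update_self]
  have hc₂other : ∀ i, i ≠ e → i ≠ f → c₂ i = c i := by
    intro i h1 h2
    rw [hc₂def, Function.update_of_ne h1, Function.update_of_ne h2]
  have hchar : ∀ i col, c₂ i = some col →
      (i = e ∧ col = β) ∨ (i ≠ e ∧ i ≠ f ∧ c i = some col) := by
    intro i col h
    by_cases h1 : i = e
    · subst h1; rw [hc₂e] at h; exact Or.inl ⟨rfl, (Option.some.inj h).symm⟩
    by_cases h2 : i = f
    · subst h2; rw [hc₂f] at h; cases h
    · rw [hc₂other i h1 h2] at h; exact Or.inr ⟨h1, h2, h⟩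
  have hc₂none : ∀ i, c₂ i = none → i ≠ e ∧ (i = f ∨ c i = none) := by
    intro i h
    by_cases h1 : i = e
    · subst h1; rw [hc₂e] at h; cases h
    by_cases h2 : i = f
    · exact ⟨h1, Or.inl h2⟩
    · rw [hc₂other i h1 h2] at h; exact ⟨h1, Or.inr h⟩
  have hP₂ : Proper E c₂ := by
    intro i j x col hi hj hci hcj
    rcases hchar i col hci with ⟨rfl, rfl⟩ | ⟨hie, hif, hci'⟩
    · rcases hchar j _ hcj with ⟨rfl, _⟩ | ⟨hje, hjf, hcj'⟩
      · rfl
      · exfalso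
        rcases hmem_e x hi with rfl | rfl
        · exact hjf (hP hj huf hcj' hcf)
        · exact hβv j hj hcj'
    · rcases hchar j _ hcj with ⟨rfl, rfl⟩ | ⟨hje, hjf, hcj'⟩
      · exfalso
        rcases hmem_e x hj with rfl | rfl
        · exact hif (hP hi huf hci' hcf)
        · exact hβv i hi hci'
      · exact hP hi hj hci' hcj'
  have hFree2u : ∀ δ, Free E c u δ → Free E c₂ u δ := by
    intro δ hδ i hi h
    rcases hchar i δ h with ⟨rfl, rfl⟩ | ⟨_, _, h'⟩
    · exact hδ f huf hcf
    · exact hδ i hi h'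
  have hFree2w : ∀ δ, Free E c w δ → Free E c₂ w δ := by
    intro δ hδ i hi h
    rcases hchar i δ h with ⟨rfl, _⟩ | ⟨_, _, h'⟩
    · exact hwe hi
    · exact hδ i hi h'
  by_cases H2 : ∃ δ, Free E c₂ u δ ∧ Free E c₂ w δ
  · obtain ⟨δ, h1, h2⟩ := H2
    refine ⟨Function.update c₂ f (some δ), color_edge E hP₂ hEf hc₂f h1 h2, ?_⟩
    intro i hi
    obtain ⟨h3, h4⟩ := update_none hi
    obtain ⟨h5, h6⟩ := hc₂none i h3
    exact ⟨h6.resolve_left h4, h5⟩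
  by_cases H3 : ∃ γ, Free E c v γ ∧ Free E c w γ ∧ γ ≠ β
  · obtain ⟨γ, hγv, hγw, hγβ⟩ := H3
    have hFu := key_card c e u hue he
    obtain ⟨α, hα⟩ := Finset.card_pos.mp (lt_of_lt_of_le (by omega) hFu)
    have hαu : Free E c u α := (mem_filter.mp hα).2
    have hαβ : α ≠ β := by rintro rfl; exact H1 α hαu hβv
    have hαγ : α ≠ γ := by rintro rfl; exact H1 α hαu hγv
    by_cases hRv : Reach E c α γ u v
    · by_cases hRw : Reach E c α γ u w
      · exact absurd (no_two_ends E hE hP hαu hγv hγw huv.symm hwu hRv hRw)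
          (fun h => hwv h.symm)
      · -- swap in c₂ on component of u, then colour f with γ
        have hcol2 : ∀ i, (c₂ i = some α ∨ c₂ i = some γ) ↔
            (c i = some α ∨ c i = some γ) := by
          intro i
          by_cases h1 : i = e
          · subst h1
            rw [hc₂e, he]
            constructor
            · rintro (h | h) <;> exfalso
              · exact hαβ (Option.some.inj h).symm
              · exact hγβ (Option.some.inj h).symm
            · rintro (h | h) <;> cases h
          by_cases h2 : i = f
          · subst h2
            rw [hc₂f, hcf]
            constructor
            · rintro (h | h) <;> cases h
            · rintro (h | h) <;> exfalso
              · exact hαβ (Option.some.inj h).symm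
              · exact hγβ (Option.some.inj h).symm
          · rw [hc₂other i h1 h2]
        have hLink : Link E c₂ α γ = Link E c α γ := by
          funext x y
          apply propext
          constructor
          · rintro ⟨i, hci, h⟩; exact ⟨i, (hcol2 i).mp hci, h⟩
          · rintro ⟨i, hci, h⟩; exact ⟨i, (hcol2 i).mpr hci, h⟩
        have hReach : ∀ x, Reach E c₂ α γ u x ↔ Reach E c α γ u x := by
          intro x; unfold Reach; rw [hLink]
        set c₃ := swapc E c₂ α γ u with hc₃def
        have hP₃ : Proper E c₃ := proper_swap E hP₂
        have h3u : Free E c₃ u γ :=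
          free_swap_reach E Relation.ReflTransGen.refl
            (by rw [swapcol_gamma]; exact hFree2u α hαu)
        have h3w : Free E c₃ w γ :=
          free_swap_unreach E (fun h => hRw ((hReach w).mp h)) (hFree2w γ hγw)
        have h3f : c₃ f = none := (swap_none_iff E).mpr hc₂f
        refine ⟨Function.update c₃ f (some γ), color_edge E hP₃ hEf h3f h3u h3w, ?_⟩
        intro i hi
        obtain ⟨h3, h4⟩ := update_none hi
        have h2' : c₂ i = none := (swap_none_iff E).mp h3
        obtain ⟨h5, h6⟩ := hc₂none i h2'
        exact ⟨h6.resolve_left h4, h5⟩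
    · -- swap in c on component of u, then colour e with γ
      set c₃ := swapc E c α γ u with hc₃def
      have hP₃ : Proper E c₃ := proper_swap E hP
      have h3u : Free E c₃ u γ :=
        free_swap_reach E Relation.ReflTransGen.refl
          (by rw [swapcol_gamma]; exact hαu)
      have h3v : Free E c₃ v γ := free_swap_unreach E hRv hγv
      have h3e : c₃ e = none := (swap_none_iff E).mpr he
      refine ⟨Function.update c₃ e (some γ), color_edge E hP₃ hEe h3e h3u h3v, ?_⟩
      intro i hi
      obtain ⟨h3, h4⟩ := update_none hi
      exact ⟨(swap_none_iff E).mp h3, h4⟩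
  · -- counting contradiction: this case is impossible
    exfalso
    push_neg at H2 H3
    have hFu := key_card c e u hue he
    have hFv' := key_card c e v hve he
    have hFw : k - Δ ≤ (univ.filter (fun δ : Fin k => Free E c w δ)).card := by
      apply card_free E c w
      apply le_trans (card_le_card ?_) (hdeg w)
      intro i hi
      simp only [mem_filter, mem_univ, true_and] at hi ⊢
      exact hi.1
    set Fu := univ.filter (fun δ : Fin k => Free E c u δ) with hFudef
    set Fv := univ.filter (fun δ : Fin k => Free E c v δ) with hFvdef
    set Fw := univ.filter (fun δ : Fin k => Free E c w δ) with hFwdef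
    have dUV : Disjoint Fu Fv := by
      rw [Finset.disjoint_left]
      intro δ h1 h2
      exact H1 δ (mem_filter.mp h1).2 (mem_filter.mp h2).2
    have dUW : Disjoint Fu Fw := by
      rw [Finset.disjoint_left]
      intro δ h1 h2
      exact H2 δ (hFree2u δ (mem_filter.mp h1).2) (hFree2w δ (mem_filter.mp h2).2)
    have dVW : Disjoint Fv Fw := by
      rw [Finset.disjoint_left]
      intro δ h1 h2
      have : δ = β := H3 δ (mem_filter.mp h1).2 (mem_filter.mp h2).2
      subst this
      exact (mem_filter.mp h2).2 f hwf hcf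
    have hunion : Fu.card + Fv.card + Fw.card ≤ k := by
      have h1 : (Fu ∪ Fv ∪ Fw).card = Fu.card + Fv.card + Fw.card := by
        rw [Finset.card_union_of_disjoint, Finset.card_union_of_disjoint dUV]
        exact Finset.disjoint_union_left.mpr ⟨dUW, dVW⟩
      calc Fu.card + Fv.card + Fw.card = (Fu ∪ Fv ∪ Fw).card := h1.symm
        _ ≤ (univ : Finset (Fin k)).card := card_le_card (subset_univ _)
        _ = k := by simp
    omega

end Main


variable (E : ι → Finset V)

lemma exists_total (hE : ∀ i, (E i).card = 2) {Δ : ℕ}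
    (hdeg : ∀ v : V, (univ.filter (fun i : ι => v ∈ E i)).card ≤ Δ)
    (hkD : Δ ≤ k) (hk3 : 3 * Δ ≤ 2 * k + 1) :
    ∃ c : ι → Fin k, ∀ i j : ι, i ≠ j → (E i ∩ E j).Nonempty → c i ≠ c j := by
  classical
  have key : ∀ n (c : ι → Option (Fin k)), Proper E c →
      (univ.filter (fun i => c i = none)).card ≤ n →
      ∃ c' : ι → Option (Fin k), Proper E c' ∧ ∀ i, c' i ≠ none := by
    intro n
    induction n with
    | zero =>
      intro c hP hcard
      refine ⟨c, hP, fun i hi => ?_⟩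
      have hmem : i ∈ univ.filter (fun i => c i = none) := by simp [hi]
      rw [Nat.le_zero, card_eq_zero] at hcard
      rw [hcard] at hmem
      exact absurd hmem (Finset.notMem_empty i)
    | succ n ih =>
      intro c hP hcard
      by_cases hex : ∃ e, c e = none
      · obtain ⟨e, he⟩ := hex
        obtain ⟨c', hP', hc'⟩ := extend_step E hE hdeg hkD hk3 hP he
        apply ih c' hP'
        have hsub : univ.filter (fun i => c' i = none) ⊆
            (univ.filter (fun i => c i = none)).erase e := by
          intro i hi
          simp only [mem_filter, mem_univ, true_and] at hi
          obtain ⟨h1, h2⟩ := hc' i hi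
          exact mem_erase.mpr ⟨h2, by simp [h1]⟩
        have hlt := card_le_card hsub
        have hem : e ∈ univ.filter (fun i => c i = none) := by simp [he]
        rw [card_erase_of_mem hem] at hlt
        omega
      · push_neg at hex
        exact ⟨c, hP, hex⟩
  obtain ⟨c, hP, hall⟩ := key _ (fun _ => none)
    (by intro i j x col _ _ h; cases h) le_rfl
  have hsome : ∀ i, ∃ δ, c i = some δ := fun i =>
    Option.ne_none_iff_exists'.mp (hall i)
  refine ⟨fun i => (hsome i).choose, fun i j hij hint hfalse => ?_⟩
  obtain ⟨x, hx⟩ := hint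
  rw [mem_inter] at hx
  simp only at hfalse
  refine hij (hP hx.1 hx.2 (hsome i).choose_spec ?_)
  rw [(hsome j).choose_spec, ← hfalse]

end Shannon9

/-- Shannon's theorem: a multigraph (2-uniform multihypergraph) of maximum
degree at most Δ has chromatic index at most ⌊3Δ/2⌋. -/
theorem stmt_9 {V : Type*} [DecidableEq V] {ι : Type*} [Fintype ι] [DecidableEq ι]
    (Δ : ℕ)
    (E : ι → Finset V)
    (huniform : ∀ i, (E i).card = 2)
    (hdeg : ∀ v : V, (Finset.univ.filter (fun i : ι => v ∈ E i)).card ≤ Δ) :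
    sInf {n : ℕ | ∃ c : ι → Fin n,
        ∀ i j : ι, i ≠ j → (E i ∩ E j).Nonempty → c i ≠ c j}
      ≤ 3 * Δ / 2 := by
  classical
  obtain ⟨c, hc⟩ := Shannon9.exists_total (k := 3 * Δ / 2) E huniform hdeg
    (by omega) (by omega)
  exact Nat.sInf_le ⟨c, hc⟩
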